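/- The map from Sp(n) to the set 𝒜(n) of anti-symplectic involutions given by ψ ↦ ψ⁻¹Rψ is surjective, and ψ₁⁻¹Rψ₁ = ψ₂⁻¹Rψ₂ if and only if ψ₁ψ₂⁻¹ lies in the subgroup GL(n,ℝ) ⊂ Sp(n) of matrices commuting with R. Consequently 𝒜(n) is in bijection with the coset space GL(n,ℝ)\Sp(n). -/

import Mathlib

open Matrix

noncomputable section

/-- The standard symplectic structure matrix on `ℝ^{2n} = ℝ^n ⊕ ℝ^n`. -/
def J (n : ℕ) : Matrix (Fin n ⊕ Fin n) (Fin n ⊕ Fin n) ℝ :=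
  Matrix.fromBlocks 0 1 (-1) 0

/-- The standard symplectic form `ω(v,w) = ⟨v, J w⟩`. -/
def symForm (n : ℕ) (v w : Fin n ⊕ Fin n → ℝ) : ℝ :=
  v ⬝ᵥ (J n).mulVec w

/-- A matrix is symplectic if it preserves `ω`. -/
def IsSymplectic (n : ℕ) (ψ : Matrix (Fin n ⊕ Fin n) (Fin n ⊕ Fin n) ℝ) : Prop :=
  ∀ v w, symForm n (ψ.mulVec v) (ψ.mulVec w) = symForm n v w

/-- A linear anti-symplectic involution: `S² = 1` and `ω(Sv,Sw) = -ω(v,w)`. -/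
def IsAntiSympInv (n : ℕ) (S : Matrix (Fin n ⊕ Fin n) (Fin n ⊕ Fin n) ℝ) : Prop :=
  S * S = 1 ∧ ∀ v w, symForm n (S.mulVec v) (S.mulVec w) = - symForm n v w

/-- The standard anti-symplectic involution `R = diag(1,-1)`. -/
def Rmat (n : ℕ) : Matrix (Fin n ⊕ Fin n) (Fin n ⊕ Fin n) ℝ :=
  Matrix.fromBlocks 1 0 0 (-1)

/-- A Lagrangian subspace: `n`-dimensional and `ω` vanishes on it. -/
def IsLagrangian (n : ℕ) (L : Submodule ℝ (Fin n ⊕ Fin n → ℝ)) : Prop :=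
  Module.finrank ℝ L = n ∧ ∀ v ∈ L, ∀ w ∈ L, symForm n v w = 0

variable {n : ℕ}

lemma bilin_eq (A : Matrix (Fin n ⊕ Fin n) (Fin n ⊕ Fin n) ℝ) (v w : Fin n ⊕ Fin n → ℝ) :
    symForm n (A.mulVec v) (A.mulVec w) = v ⬝ᵥ (Aᵀ * J n * A).mulVec w := by
  rw [symForm]
  conv_rhs => rw [show (Aᵀ * _root_.J n * A) *ᵥ w = Aᵀ *ᵥ (_root_.J n *ᵥ (A *ᵥ w)) by
    rw [← mulVec_mulVec, ← mulVec_mulVec], dotProduct_mulVec, vecMul_transpose]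

lemma bilin_ext {A B : Matrix (Fin n ⊕ Fin n) (Fin n ⊕ Fin n) ℝ}
    (h : ∀ v w, v ⬝ᵥ A.mulVec w = v ⬝ᵥ B.mulVec w) : A = B := by
  ext i j
  have := h (Pi.single i 1) (Pi.single j 1)
  simpa [mulVec_single, single_dotProduct] using this

lemma neg_one_blocks : (-1 : Matrix (Fin n ⊕ Fin n) (Fin n ⊕ Fin n) ℝ) =
    Matrix.fromBlocks (-1) 0 0 (-1) := by
  ext (i|i) (j|j) <;> simp [Matrix.fromBlocks, Matrix.one_apply, Sum.elim] <;> aesop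

lemma J_mul_J : _root_.J n * _root_.J n = -1 := by
  rw [_root_.J, Matrix.fromBlocks_multiply, neg_one_blocks]
  congr 1 <;> simp

lemma isSymplectic_iff {ψ : Matrix (Fin n ⊕ Fin n) (Fin n ⊕ Fin n) ℝ} :
    IsSymplectic n ψ ↔ ψᵀ * J n * ψ = J n := by
  constructor
  · intro h
    refine bilin_ext fun v w => ?_
    rw [← bilin_eq]; exact h v w
  · intro h v w
    rw [bilin_eq, h]; rfl

lemma antiForm_iff {S : Matrix (Fin n ⊕ Fin n) (Fin n ⊕ Fin n) ℝ} :
    (∀ v w, symForm n (S.mulVec v) (S.mulVec w) = - symForm n v w) ↔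
      Sᵀ * _root_.J n * S = -(_root_.J n) := by
  constructor
  · intro h
    refine bilin_ext fun v w => ?_
    rw [← bilin_eq, h]
    simp [symForm, Matrix.neg_mulVec]
  · intro h v w
    rw [bilin_eq, h, symForm, Matrix.neg_mulVec, dotProduct_neg]

lemma R_transpose : (Rmat n)ᵀ = Rmat n := by
  rw [Rmat, Matrix.fromBlocks_transpose]; simp

lemma R_mul_R : Rmat n * Rmat n = 1 := by
  rw [Rmat, Matrix.fromBlocks_multiply, ← Matrix.fromBlocks_one]
  congr 1 <;> simp

lemma R_J_R : (Rmat n)ᵀ * _root_.J n * Rmat n = -(_root_.J n) := by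
  rw [R_transpose, Rmat, _root_.J, Matrix.fromBlocks_multiply, Matrix.fromBlocks_multiply]
  rw [show -(Matrix.fromBlocks 0 1 (-1) 0 : Matrix (Fin n ⊕ Fin n) (Fin n ⊕ Fin n) ℝ)
      = Matrix.fromBlocks 0 (-1) 1 0 by
    ext (i|i) (j|j) <;> simp [Matrix.fromBlocks]]
  congr 1 <;> simp

lemma J_isUnit : IsUnit (_root_.J n) := by
  refine Matrix.isUnit_iff_isUnit_det _ |>.mpr ?_
  have h := J_mul_J (n := n)
  have : (_root_.J n).det * (_root_.J n).det = 1 := by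
    have := congrArg Matrix.det h
    rw [Matrix.det_mul, Matrix.det_neg, Matrix.det_one] at this
    simpa [Fintype.card_sum] using this
  exact IsUnit.of_mul_eq_one _ this

lemma symplectic_isUnit {ψ : Matrix (Fin n ⊕ Fin n) (Fin n ⊕ Fin n) ℝ}
    (h : IsSymplectic n ψ) : IsUnit ψ := by
  rw [isSymplectic_iff] at h
  refine Matrix.isUnit_iff_isUnit_det _ |>.mpr ?_
  have := congrArg Matrix.det h
  rw [Matrix.det_mul, Matrix.det_mul, Matrix.det_transpose] at this
  have hJ : (_root_.J n).det ≠ 0 := by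
    have := J_isUnit (n := n)
    rw [Matrix.isUnit_iff_isUnit_det] at this
    exact this.ne_zero
  have h2 : ψ.det * ψ.det = 1 := by
    refine mul_right_cancel₀ hJ ?_
    rw [one_mul]; conv_rhs => rw [← this]
    ring
  exact IsUnit.of_mul_eq_one _ h2

lemma part2 (ψ₁ ψ₂ : Matrix (Fin n ⊕ Fin n) (Fin n ⊕ Fin n) ℝ)
    (h1 : IsSymplectic n ψ₁) (h2 : IsSymplectic n ψ₂) :
    ψ₁⁻¹ * Rmat n * ψ₁ = ψ₂⁻¹ * Rmat n * ψ₂ ↔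
      (ψ₁ * ψ₂⁻¹) * Rmat n = Rmat n * (ψ₁ * ψ₂⁻¹) := by
  have d1 : IsUnit ψ₁.det := (Matrix.isUnit_iff_isUnit_det _).mp (symplectic_isUnit h1)
  have d2 : IsUnit ψ₂.det := (Matrix.isUnit_iff_isUnit_det _).mp (symplectic_isUnit h2)
  constructor
  · intro h
    have e1 : ψ₁ * (ψ₂⁻¹ * Rmat n * ψ₂) * ψ₂⁻¹ = ψ₁ * ψ₂⁻¹ * Rmat n := by
      simp only [Matrix.mul_assoc, Matrix.mul_nonsing_inv _ d2, Matrix.mul_one]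
    have e2 : ψ₁ * (ψ₁⁻¹ * Rmat n * ψ₁) * ψ₂⁻¹ = Rmat n * (ψ₁ * ψ₂⁻¹) := by
      simp only [Matrix.mul_assoc, Matrix.mul_nonsing_inv_cancel_left _ _ d1]
    rw [← e1, ← h, e2]
  · intro h
    have e3 : ψ₁⁻¹ * ((ψ₁ * ψ₂⁻¹) * Rmat n) * ψ₂ = ψ₂⁻¹ * Rmat n * ψ₂ := by
      simp only [Matrix.mul_assoc, Matrix.nonsing_inv_mul_cancel_left _ _ d1]
    have e4 : ψ₁⁻¹ * (Rmat n * (ψ₁ * ψ₂⁻¹)) * ψ₂ = ψ₁⁻¹ * Rmat n * ψ₁ := by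
      simp only [Matrix.mul_assoc, Matrix.nonsing_inv_mul _ d2, Matrix.mul_one]
    rw [← e4, ← h, e3]

lemma symForm_S (S : Matrix (Fin n ⊕ Fin n) (Fin n ⊕ Fin n) ℝ)
    (hS : Sᵀ * _root_.J n * S = -(_root_.J n)) (v w : Fin n ⊕ Fin n → ℝ) :
    symForm n (S.mulVec v) (S.mulVec w) = - symForm n v w := by
  rw [bilin_eq, hS, symForm, Matrix.neg_mulVec, dotProduct_neg]

lemma vec_eq_zero (x : Fin n ⊕ Fin n → ℝ) (h : ∀ v, v ⬝ᵥ x = 0) : x = 0 := by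
  funext i
  simpa [single_dotProduct] using h (Pi.single i 1)

lemma perp_zero (w : Fin n ⊕ Fin n → ℝ) (h : ∀ v, symForm n v w = 0) : w = 0 := by
  have hJ : (_root_.J n).mulVec w = 0 := vec_eq_zero _ h
  have : (_root_.J n).mulVec ((_root_.J n).mulVec w) = 0 := by rw [hJ, Matrix.mulVec_zero]
  rw [Matrix.mulVec_mulVec, J_mul_J, Matrix.neg_mulVec, Matrix.one_mulVec] at this
  simpa using congrArg Neg.neg this

section Part1

variable (S : Matrix (Fin n ⊕ Fin n) (Fin n ⊕ Fin n) ℝ)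

/-- +1 eigenspace of `S`. -/
def Lp : Submodule ℝ (Fin n ⊕ Fin n → ℝ) := LinearMap.ker (S.mulVecLin - LinearMap.id)

/-- -1 eigenspace of `S`. -/
def Lm : Submodule ℝ (Fin n ⊕ Fin n → ℝ) := LinearMap.ker (S.mulVecLin + LinearMap.id)

lemma mem_Lp {v} : v ∈ Lp S ↔ S.mulVec v = v := by
  simp [Lp, LinearMap.mem_ker, sub_eq_zero]

lemma mem_Lm {v} : v ∈ Lm S ↔ S.mulVec v = -v := by
  simp [Lm, LinearMap.mem_ker, add_eq_zero_iff_eq_neg]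

lemma SS_vec (hS2 : S * S = 1) (v : Fin n ⊕ Fin n → ℝ) : S.mulVec (S.mulVec v) = v := by
  rw [Matrix.mulVec_mulVec, hS2, Matrix.one_mulVec]

lemma sup_eq_top (hS2 : S * S = 1) : Lp S ⊔ Lm S = ⊤ := by
  rw [eq_top_iff]
  intro v _
  have h1 : ((1:ℝ)/2) • (v + S.mulVec v) ∈ Lp S := by
    rw [mem_Lp, Matrix.mulVec_smul, Matrix.mulVec_add, SS_vec S hS2]
    rw [add_comm]
  have h2 : ((1:ℝ)/2) • (v - S.mulVec v) ∈ Lm S := by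
    rw [mem_Lm, Matrix.mulVec_smul, Matrix.mulVec_sub, SS_vec S hS2]
    rw [← smul_neg]
    congr 1
    abel
  refine Submodule.mem_sup.mpr ⟨_, h1, _, h2, ?_⟩
  rw [← smul_add]
  rw [show v + S.mulVec v + (v - S.mulVec v) = (2:ℝ) • v by module]
  rw [smul_smul]
  norm_num

lemma inf_eq_bot : Lp S ⊓ Lm S = ⊥ := by
  rw [eq_bot_iff]
  intro v hv
  obtain ⟨h1, h2⟩ := Submodule.mem_inf.mp hv
  rw [mem_Lp] at h1
  rw [mem_Lm] at h2
  have hvv : v = -v := by conv_lhs => rw [← h1, h2]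
  have h3 : v + v = 0 := by nth_rewrite 2 [hvv]; simp
  have h4 : (2:ℝ) • v = 0 := by rw [two_smul]; exact h3
  have h5 := (smul_eq_zero.mp h4).resolve_left (by norm_num)
  simp [h5]

lemma symForm_neg_left (v w : Fin n ⊕ Fin n → ℝ) : symForm n (-v) w = - symForm n v w := by
  simp [symForm]

lemma symForm_neg_right (v w : Fin n ⊕ Fin n → ℝ) : symForm n v (-w) = - symForm n v w := by
  simp [symForm, Matrix.mulVec_neg]

lemma symForm_add_left (u v w : Fin n ⊕ Fin n → ℝ) :
    symForm n (u + v) w = symForm n u w + symForm n v w := by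
  simp [symForm, add_dotProduct]

lemma Lp_isotropic (hSa : ∀ v w, symForm n (S.mulVec v) (S.mulVec w) = - symForm n v w) :
    ∀ v ∈ Lp S, ∀ w ∈ Lp S, symForm n v w = 0 := by
  intro v hv w hw
  have h := hSa v w
  rw [(mem_Lp S).mp hv, (mem_Lp S).mp hw] at h
  linarith

lemma Lm_isotropic (hSa : ∀ v w, symForm n (S.mulVec v) (S.mulVec w) = - symForm n v w) :
    ∀ v ∈ Lm S, ∀ w ∈ Lm S, symForm n v w = 0 := by
  intro v hv w hw
  have h := hSa v w
  rw [(mem_Lm S).mp hv, (mem_Lm S).mp hw, symForm_neg_left, symForm_neg_right] at h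
  linarith

lemma pairing_zero_Lm (hS2 : S * S = 1)
    (hSa : ∀ v w, symForm n (S.mulVec v) (S.mulVec w) = - symForm n v w)
    (w : Fin n ⊕ Fin n → ℝ) (hw : w ∈ Lm S)
    (h : ∀ v ∈ Lp S, symForm n v w = 0) : w = 0 := by
  apply perp_zero
  intro v
  have hv : v ∈ Lp S ⊔ Lm S := by rw [sup_eq_top S hS2]; trivial
  obtain ⟨a, ha, b, hb, rfl⟩ := Submodule.mem_sup.mp hv
  rw [symForm_add_left, h a ha, Lm_isotropic S hSa b hb w hw, add_zero]

lemma pairing_zero_Lp (hS2 : S * S = 1)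
    (hSa : ∀ v w, symForm n (S.mulVec v) (S.mulVec w) = - symForm n v w)
    (w : Fin n ⊕ Fin n → ℝ) (hw : w ∈ Lp S)
    (h : ∀ v ∈ Lm S, symForm n v w = 0) : w = 0 := by
  apply perp_zero
  intro v
  have hv : v ∈ Lp S ⊔ Lm S := by rw [sup_eq_top S hS2]; trivial
  obtain ⟨a, ha, b, hb, rfl⟩ := Submodule.mem_sup.mp hv
  rw [symForm_add_left, h b hb, Lp_isotropic S hSa a ha w hw, add_zero]

/-- The pairing of `Lm` against `Lp` via `ω`. -/
def Phi : Lm S →ₗ[ℝ] Module.Dual ℝ (Lp S) where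
  toFun w :=
    { toFun := fun v => symForm n (v : Fin n ⊕ Fin n → ℝ) (w : Fin n ⊕ Fin n → ℝ)
      map_add' := fun a b => by simp [symForm, add_dotProduct]
      map_smul' := fun c a => by simp [symForm, smul_dotProduct] }
  map_add' a b := by
    ext v
    simp [symForm, Matrix.mulVec_add]
  map_smul' c a := by
    ext v
    simp [symForm, Matrix.mulVec_smul]

/-- The pairing of `Lp` against `Lm` via `ω`. -/
def Psi : Lp S →ₗ[ℝ] Module.Dual ℝ (Lm S) where
  toFun w :=
    { toFun := fun v => symForm n (v : Fin n ⊕ Fin n → ℝ) (w : Fin n ⊕ Fin n → ℝ)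
      map_add' := fun a b => by simp [symForm, add_dotProduct]
      map_smul' := fun c a => by simp [symForm, smul_dotProduct] }
  map_add' a b := by
    ext v
    simp [symForm, Matrix.mulVec_add]
  map_smul' c a := by
    ext v
    simp [symForm, Matrix.mulVec_smul]

lemma Phi_inj (hS2 : S * S = 1)
    (hSa : ∀ v w, symForm n (S.mulVec v) (S.mulVec w) = - symForm n v w) :
    Function.Injective (Phi S) := by
  rw [← LinearMap.ker_eq_bot, eq_bot_iff]
  intro w hw
  rw [LinearMap.mem_ker] at hw
  have : (w : Fin n ⊕ Fin n → ℝ) = 0 := by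
    refine pairing_zero_Lm S hS2 hSa _ w.2 fun v hv => ?_
    exact congrFun (congrArg DFunLike.coe hw) ⟨v, hv⟩
  simpa [Submodule.mem_bot] using Subtype.ext this

lemma Psi_inj (hS2 : S * S = 1)
    (hSa : ∀ v w, symForm n (S.mulVec v) (S.mulVec w) = - symForm n v w) :
    Function.Injective (Psi S) := by
  rw [← LinearMap.ker_eq_bot, eq_bot_iff]
  intro w hw
  rw [LinearMap.mem_ker] at hw
  have : (w : Fin n ⊕ Fin n → ℝ) = 0 := by
    refine pairing_zero_Lp S hS2 hSa _ w.2 fun v hv => ?_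
    exact congrFun (congrArg DFunLike.coe hw) ⟨v, hv⟩
  simpa [Submodule.mem_bot] using Subtype.ext this

lemma finrank_Lp_Lm (hS2 : S * S = 1)
    (hSa : ∀ v w, symForm n (S.mulVec v) (S.mulVec w) = - symForm n v w) :
    Module.finrank ℝ (Lp S) = n ∧ Module.finrank ℝ (Lm S) = n := by
  have hV : Module.finrank ℝ (Fin n ⊕ Fin n → ℝ) = n + n := by
    simp [Module.finrank_fintype_fun_eq_card, Fintype.card_sum]
  have hsum : Module.finrank ℝ (Lp S) + Module.finrank ℝ (Lm S) = n + n := by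
    have h := Submodule.finrank_sup_add_finrank_inf_eq (Lp S) (Lm S)
    rw [sup_eq_top S hS2, inf_eq_bot S, finrank_top, finrank_bot, hV] at h
    omega
  have h1 : Module.finrank ℝ (Lm S) ≤ Module.finrank ℝ (Lp S) := by
    have := LinearMap.finrank_le_finrank_of_injective (Phi_inj S hS2 hSa)
    rwa [Subspace.dual_finrank_eq] at this
  have h2 : Module.finrank ℝ (Lp S) ≤ Module.finrank ℝ (Lm S) := by
    have := LinearMap.finrank_le_finrank_of_injective (Psi_inj S hS2 hSa)
    rwa [Subspace.dual_finrank_eq] at this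
  omega

end Part1

lemma Jn_transpose : (_root_.J n)ᵀ = -(_root_.J n) := by
  ext (i|i) (j|j) <;>
    simp [_root_.J, Matrix.fromBlocks, Matrix.transpose_apply, Matrix.one_apply, eq_comm]

lemma symForm_antisym (v w : Fin n ⊕ Fin n → ℝ) : symForm n v w = - symForm n w v := by
  rw [symForm, symForm, dotProduct_mulVec w, ← Matrix.mulVec_transpose, Jn_transpose,
    Matrix.neg_mulVec, neg_dotProduct, neg_neg, dotProduct_comm]

lemma symForm_sum_left {ι : Type*} [Fintype ι] (g : ι → ℝ) (v : ι → (Fin n ⊕ Fin n → ℝ))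
    (w : Fin n ⊕ Fin n → ℝ) :
    symForm n (∑ c, g c • v c) w = ∑ c, g c * symForm n (v c) w := by
  simp only [symForm, dotProduct, Finset.sum_apply, Pi.smul_apply, smul_eq_mul,
    Finset.sum_mul, mul_assoc]
  rw [Finset.sum_comm]
  exact Finset.sum_congr rfl fun c _ => (Finset.mul_sum _ _ _).symm

lemma symForm_sum_right {ι : Type*} [Fintype ι] (g : ι → ℝ) (w : ι → (Fin n ⊕ Fin n → ℝ))
    (v : Fin n ⊕ Fin n → ℝ) :
    symForm n v (∑ c, g c • w c) = ∑ c, g c * symForm n v (w c) := by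
  rw [symForm_antisym, symForm_sum_left, ← Finset.sum_neg_distrib]
  refine Finset.sum_congr rfl fun c _ => ?_
  rw [symForm_antisym v (w c)]
  ring

lemma mat_ext_singles {A B : Matrix (Fin n ⊕ Fin n) (Fin n ⊕ Fin n) ℝ}
    (h : ∀ c, A.mulVec (Pi.single c 1) = B.mulVec (Pi.single c 1)) : A = B := by
  ext i c
  have := congrFun (h c) i
  simpa [Matrix.mulVec_single] using this

lemma Rmat_single_inl (j : Fin n) :
    (Rmat n).mulVec (Pi.single (Sum.inl j : Fin n ⊕ Fin n) 1) =
      Pi.single (Sum.inl j : Fin n ⊕ Fin n) 1 := by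
  funext i
  rw [Matrix.mulVec_single]
  cases i <;> simp [Rmat, Matrix.fromBlocks, Pi.single_apply, Matrix.one_apply]

lemma Rmat_single_inr (j : Fin n) :
    (Rmat n).mulVec (Pi.single (Sum.inr j : Fin n ⊕ Fin n) 1) =
      -Pi.single (Sum.inr j : Fin n ⊕ Fin n) 1 := by
  funext i
  rw [Matrix.mulVec_single]
  cases i <;> simp [Rmat, Matrix.fromBlocks, Pi.single_apply, Matrix.one_apply]

lemma isSymplectic_inv {ψ : Matrix (Fin n ⊕ Fin n) (Fin n ⊕ Fin n) ℝ}
    (h : IsSymplectic n ψ) : IsSymplectic n ψ⁻¹ := by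
  have hdet : IsUnit ψ.det := (Matrix.isUnit_iff_isUnit_det _).mp (symplectic_isUnit h)
  intro v w
  have h2 := h (ψ⁻¹.mulVec v) (ψ⁻¹.mulVec w)
  rw [Matrix.mulVec_mulVec, Matrix.mulVec_mulVec, Matrix.mul_nonsing_inv _ hdet,
    Matrix.one_mulVec, Matrix.one_mulVec] at h2
  exact h2.symm

lemma conj_anti {ψ : Matrix (Fin n ⊕ Fin n) (Fin n ⊕ Fin n) ℝ} (h : IsSymplectic n ψ) :
    IsAntiSympInv n (ψ⁻¹ * Rmat n * ψ) := by
  have hdet : IsUnit ψ.det := (Matrix.isUnit_iff_isUnit_det _).mp (symplectic_isUnit h)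
  constructor
  · calc ψ⁻¹ * Rmat n * ψ * (ψ⁻¹ * Rmat n * ψ)
        = ψ⁻¹ * (Rmat n * ((ψ * ψ⁻¹) * (Rmat n * ψ))) := by
          simp only [Matrix.mul_assoc]
      _ = 1 := by
          rw [Matrix.mul_nonsing_inv _ hdet, Matrix.one_mul, ← Matrix.mul_assoc (Rmat n),
            R_mul_R, Matrix.one_mul, Matrix.nonsing_inv_mul _ hdet]
  · intro v w
    have hR : ∀ a b, symForm n ((Rmat n).mulVec a) ((Rmat n).mulVec b) = - symForm n a b :=
      fun a b => symForm_S (Rmat n) R_J_R a b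
    have hmv : ∀ x, (ψ⁻¹ * Rmat n * ψ).mulVec x = ψ⁻¹.mulVec ((Rmat n).mulVec (ψ.mulVec x)) := by
      intro x
      rw [← Matrix.mulVec_mulVec, ← Matrix.mulVec_mulVec]
    rw [hmv, hmv, isSymplectic_inv h, hR, h]

lemma part1 (S : Matrix (Fin n ⊕ Fin n) (Fin n ⊕ Fin n) ℝ) (hS : IsAntiSympInv n S) :
    ∃ ψ, IsSymplectic n ψ ∧ ψ⁻¹ * Rmat n * ψ = S := by
  obtain ⟨hS2, hSa⟩ := hS
  rcases Nat.eq_zero_or_pos n with hn | hn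
  · subst hn
    refine ⟨1, fun v w => by simp [Matrix.one_mulVec], ?_⟩
    ext i j
    rcases i with i | i <;> exact i.elim0
  · haveI : Nonempty (Fin n ⊕ Fin n) := ⟨Sum.inl ⟨0, hn⟩⟩
    obtain ⟨hrp, hrm⟩ := finrank_Lp_Lm S hS2 hSa
    let eB : Module.Basis (Fin n) ℝ (Lp S) := Module.finBasisOfFinrankEq ℝ _ hrp
    have hrank : Module.finrank ℝ (Lm S) = Module.finrank ℝ (Module.Dual ℝ (Lp S)) := by
      rw [Subspace.dual_finrank_eq, hrp, hrm]
    have hsurj :=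
      (LinearMap.injective_iff_surjective_of_finrank_eq_finrank hrank).mp (Phi_inj S hS2 hSa)
    let Φe : Lm S ≃ₗ[ℝ] Module.Dual ℝ (Lp S) :=
      LinearEquiv.ofBijective (Phi S) ⟨Phi_inj S hS2 hSa, hsurj⟩
    let fB : Module.Basis (Fin n) ℝ (Lm S) := (eB.dualBasis).map Φe.symm
    set b : (Fin n ⊕ Fin n) → (Fin n ⊕ Fin n → ℝ) :=
      Sum.elim (fun i => (eB i : Fin n ⊕ Fin n → ℝ)) (fun i => (fB i : Fin n ⊕ Fin n → ℝ))
      with hbdef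
    have hbp : ∀ i, b (Sum.inl i) ∈ Lp S := fun i => (eB i).2
    have hbm : ∀ i, b (Sum.inr i) ∈ Lm S := fun i => (fB i).2
    have hpair : ∀ i j, symForm n (b (Sum.inl i)) (b (Sum.inr j)) = if i = j then 1 else 0 := by
      intro i j
      have h1 : Φe (fB j) = eB.dualBasis j := by
        simp only [fB, Module.Basis.map_apply]
        exact Φe.apply_symm_apply _
      have h2 : (Phi S (fB j)) (eB i) = symForm n (b (Sum.inl i)) (b (Sum.inr j)) := rfl
      rw [← h2, show (Phi S) (fB j) = Φe (fB j) from rfl, h1, eB.dualBasis_apply_self]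
    have key : ∀ c c', symForm n (b c) (b c') = _root_.J n c c' := by
      rintro (i | i) (j | j)
      · simp only [_root_.J, Matrix.fromBlocks, Sum.elim_inl, Matrix.of_apply,
          Matrix.zero_apply]
        exact Lp_isotropic S hSa _ (hbp i) _ (hbp j)
      · rw [hpair]
        simp [_root_.J, Matrix.fromBlocks, Matrix.one_apply]
      · rw [symForm_antisym, hpair]
        simp [_root_.J, Matrix.fromBlocks, Matrix.one_apply, eq_comm]
      · simp only [_root_.J, Matrix.fromBlocks, Sum.elim_inr, Matrix.of_apply,
          Matrix.zero_apply]
        exact Lm_isotropic S hSa _ (hbm i) _ (hbm j)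
    have hlin : LinearIndependent ℝ b := by
      rw [Fintype.linearIndependent_iff]
      intro g hg
      have hinl : ∀ j, g (Sum.inl j) = 0 := by
        intro j
        have h0 : symForm n (∑ c, g c • b c) (b (Sum.inr j)) = 0 := by
          rw [hg]; simp [symForm]
        rw [symForm_sum_left, Fintype.sum_sum_type] at h0
        simpa [key, _root_.J, Matrix.fromBlocks, Matrix.one_apply] using h0
      have hinr : ∀ j, g (Sum.inr j) = 0 := by
        intro j
        have h0 : symForm n (b (Sum.inl j)) (∑ c, g c • b c) = 0 := by
          rw [hg]; simp [symForm]
        rw [symForm_sum_right, Fintype.sum_sum_type] at h0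
        simpa [key, _root_.J, Matrix.fromBlocks, Matrix.one_apply] using h0
      rintro (j | j)
      · exact hinl j
      · exact hinr j
    have hcard : Fintype.card (Fin n ⊕ Fin n) = Module.finrank ℝ (Fin n ⊕ Fin n → ℝ) := by
      simp [Module.finrank_fintype_fun_eq_card]
    let Bb : Module.Basis (Fin n ⊕ Fin n) ℝ (Fin n ⊕ Fin n → ℝ) :=
      basisOfLinearIndependentOfCardEqFinrank hlin hcard
    have hBb : ⇑Bb = b := coe_basisOfLinearIndependentOfCardEqFinrank _ _
    set E := (Pi.basisFun ℝ (Fin n ⊕ Fin n)).equiv Bb (Equiv.refl _) with hEdef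
    set M := LinearMap.toMatrix' (E.toLinearMap) with hMdef
    have hME : ∀ v, M.mulVec v = E v := by
      intro v
      rw [← Matrix.toLin'_apply, hMdef, Matrix.toLin'_toMatrix']
      rfl
    have hMb : ∀ c, M.mulVec (Pi.single c 1) = b c := by
      intro c
      rw [hME, ← Pi.basisFun_apply, Module.Basis.equiv_apply, Equiv.refl_apply, ← hBb]
    have hMunit : IsUnit M := by
      refine ⟨⟨M, LinearMap.toMatrix' E.symm.toLinearMap, ?_, ?_⟩, rfl⟩
      · rw [hMdef, ← LinearMap.toMatrix'_comp,
          show E.toLinearMap ∘ₗ E.symm.toLinearMap = LinearMap.id from by ext x; simp]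
        exact LinearMap.toMatrix'_id
      · rw [hMdef, ← LinearMap.toMatrix'_comp,
          show E.symm.toLinearMap ∘ₗ E.toLinearMap = LinearMap.id from by ext x; simp]
        exact LinearMap.toMatrix'_id
    have hdet : IsUnit M.det := (Matrix.isUnit_iff_isUnit_det _).mp hMunit
    have hMJ : Mᵀ * _root_.J n * M = _root_.J n := by
      ext c c'
      have h := bilin_eq M (Pi.single c 1) (Pi.single c' 1)
      rw [hMb, hMb, key] at h
      simpa [Matrix.mulVec_single, single_dotProduct] using h.symm
    have hMsymp : IsSymplectic n M := isSymplectic_iff.mpr hMJ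
    have hMR : M * Rmat n = S * M := by
      apply mat_ext_singles
      rintro (j | j)
      · rw [← Matrix.mulVec_mulVec, ← Matrix.mulVec_mulVec, Rmat_single_inl, hMb]
        exact ((mem_Lp S).mp (hbp j)).symm
      · rw [← Matrix.mulVec_mulVec, ← Matrix.mulVec_mulVec, Rmat_single_inr,
          Matrix.mulVec_neg, hMb]
        exact ((mem_Lm S).mp (hbm j)).symm
    refine ⟨M⁻¹, isSymplectic_inv hMsymp, ?_⟩
    rw [Matrix.nonsing_inv_nonsing_inv _ hdet, hMR, Matrix.mul_nonsing_inv_cancel_right _ _ hdet]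

def fmap (n : ℕ) : {ψ : Matrix (Fin n ⊕ Fin n) (Fin n ⊕ Fin n) ℝ // IsSymplectic n ψ} →
    {S : Matrix (Fin n ⊕ Fin n) (Fin n ⊕ Fin n) ℝ // IsAntiSympInv n S} :=
  fun ψ => ⟨ψ.val⁻¹ * Rmat n * ψ.val, conj_anti ψ.2⟩

def gmap (n : ℕ) :
    Quot (fun ψ₁ ψ₂ : {ψ : Matrix (Fin n ⊕ Fin n) (Fin n ⊕ Fin n) ℝ // IsSymplectic n ψ} =>
        (ψ₁.val * ψ₂.val⁻¹) * Rmat n = Rmat n * (ψ₁.val * ψ₂.val⁻¹)) →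
      {S : Matrix (Fin n ⊕ Fin n) (Fin n ⊕ Fin n) ℝ // IsAntiSympInv n S} :=
  Quot.lift (fmap n) (fun a b hab => Subtype.ext ((part2 a.1 b.1 a.2 b.2).mpr hab))

lemma part3 (n : ℕ) :
    Nonempty
      (Quot (fun ψ₁ ψ₂ : {ψ : Matrix (Fin n ⊕ Fin n) (Fin n ⊕ Fin n) ℝ //
              IsSymplectic n ψ} =>
            (ψ₁.val * ψ₂.val⁻¹) * Rmat n = Rmat n * (ψ₁.val * ψ₂.val⁻¹)) ≃
        {S : Matrix (Fin n ⊕ Fin n) (Fin n ⊕ Fin n) ℝ // IsAntiSympInv n S}) := by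
  refine ⟨Equiv.ofBijective (gmap n) ⟨?_, ?_⟩⟩
  · intro q1 q2
    induction q1 using Quot.inductionOn with | _ a => ?_
    induction q2 using Quot.inductionOn with | _ b => ?_
    intro h
    have h2 : a.val⁻¹ * Rmat n * a.val = b.val⁻¹ * Rmat n * b.val := Subtype.ext_iff.mp h
    exact Quot.sound ((part2 a.1 b.1 a.2 b.2).mp h2)
  · rintro ⟨S, hS⟩
    obtain ⟨ψ, hψ, hconj⟩ := part1 S hS
    exact ⟨Quot.mk _ ⟨ψ, hψ⟩, Subtype.ext (show ψ⁻¹ * Rmat n * ψ = S from hconj)⟩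


theorem stmt7 (n : ℕ) :
    (∀ S : Matrix (Fin n ⊕ Fin n) (Fin n ⊕ Fin n) ℝ,
      IsAntiSympInv n S →
        ∃ ψ, IsSymplectic n ψ ∧ ψ⁻¹ * Rmat n * ψ = S) ∧
    (∀ ψ₁ ψ₂ : Matrix (Fin n ⊕ Fin n) (Fin n ⊕ Fin n) ℝ,
      IsSymplectic n ψ₁ → IsSymplectic n ψ₂ →
        (ψ₁⁻¹ * Rmat n * ψ₁ = ψ₂⁻¹ * Rmat n * ψ₂ ↔
          (ψ₁ * ψ₂⁻¹) * Rmat n = Rmat n * (ψ₁ * ψ₂⁻¹))) ∧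
    Nonempty
      (Quot (fun ψ₁ ψ₂ : {ψ : Matrix (Fin n ⊕ Fin n) (Fin n ⊕ Fin n) ℝ //
              IsSymplectic n ψ} =>
            (ψ₁.val * ψ₂.val⁻¹) * Rmat n = Rmat n * (ψ₁.val * ψ₂.val⁻¹)) ≃
        {S : Matrix (Fin n ⊕ Fin n) (Fin n ⊕ Fin n) ℝ // IsAntiSympInv n S}) := by
  exact ⟨fun S hS => part1 S hS, fun ψ₁ ψ₂ h1 h2 => part2 ψ₁ ψ₂ h1 h2, part3 n⟩
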